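/- Let n ≥ 1 and α ∈ (0, 2). There exists a constant c = c(n, α) > 0 such that for every bounded C¹ function f : ℝⁿ → ℝ with ‖f‖_∞ > 0, and every x ∈ ℝⁿ, one has (interpreting the left side as a value in [0, ∞]): ∫_{ℝⁿ} |∇f(x+z) − ∇f(x)|² |z|^{−(n+α)} dz ≥ c |∇f(x)|^{2+α} / ‖f‖_∞^α. -/

import Mathlib

open MeasureTheory

set_option maxHeartbeats 1000000

open Set
open scoped RealInnerProductSpace

lemma cv_meas_norm_rpow {E : Type*} [NormedAddCommGroup E] [MeasurableSpace E] [BorelSpace E]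
    (c : ℝ) (hc : c ≠ 0) : Measurable fun z : E => ‖z‖ ^ c := by
  have h : (fun z : E => ‖z‖ ^ c) = fun z =>
      if ‖z‖ = 0 then 0 else Real.exp (Real.log ‖z‖ * c) := by
    funext z
    by_cases h : ‖z‖ = 0
    · simp [h, Real.zero_rpow hc]
    · rw [if_neg h, Real.rpow_def_of_pos (lt_of_le_of_ne (norm_nonneg z) (Ne.symm h))]
  rw [h]
  exact Measurable.ite ((isClosed_eq continuous_norm continuous_const).measurableSet)
    measurable_const
    (Real.measurable_exp.comp ((Real.measurable_log.comp continuous_norm.measurable).mul_const c))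

lemma cv_alg (m : ℕ) (α B G : ℝ) (hB : 0 < B) (hG : 0 < G) :
    Real.sqrt ((m : ℝ) + 1) ^ (-(((m : ℝ) + 1) + α)) * 2 ^ ((m : ℝ) - 1 - α) * G ^ (2 + α) / B ^ α
      = (Real.sqrt ((m : ℝ) + 1) * (2 * B / G)) ^ (-(((m : ℝ) + 1) + α))
          * (B * G * (2 * (2 * B / G)) ^ m) := by
  have hs : (0:ℝ) < Real.sqrt ((m : ℝ) + 1) := Real.sqrt_pos.mpr (by positivity)
  set R : ℝ := 2 * B / G with hRdef
  have hR : 0 < R := by positivity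
  have hlogR : Real.log R = Real.log 2 + Real.log B - Real.log G := by
    rw [hRdef, Real.log_div (by positivity) hG.ne', Real.log_mul two_ne_zero hB.ne']
  have h2R : ((2 * R) ^ m : ℝ) = (2 * R) ^ (m : ℝ) := (Real.rpow_natCast _ m).symm
  rw [h2R, Real.rpow_def_of_pos hs, Real.rpow_def_of_pos (by norm_num : (0:ℝ) < 2),
    Real.rpow_def_of_pos hG, Real.rpow_def_of_pos hB,
    Real.rpow_def_of_pos (by positivity : (0:ℝ) < Real.sqrt ((m : ℝ) + 1) * R),
    Real.rpow_def_of_pos (by positivity : (0:ℝ) < 2 * R),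
    Real.log_mul hs.ne' hR.ne', Real.log_mul two_ne_zero hR.ne', hlogR]
  rw [div_eq_iff (by positivity : Real.exp (Real.log B * α) ≠ 0)]
  nth_rewrite 2 [show B = Real.exp (Real.log B) from (Real.exp_log hB).symm]
  nth_rewrite 3 [show G = Real.exp (Real.log G) from (Real.exp_log hG).symm]
  simp only [← Real.exp_add]
  rw [Real.exp_eq_exp]
  ring

/-- Constantin–Vicol nonlinear maximum principle: there is `c = c(n,α) > 0` with
`D_α(∇f)(x) ≥ c |∇f(x)|^{2+α} / ‖f‖_∞^α` for every bounded `C¹` function `f` with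
`‖f‖_∞ > 0`. -/
theorem stmt9 (n : ℕ) (hn : 1 ≤ n) (α : ℝ) (hα0 : 0 < α) (hα2 : α < 2) :
    ∃ c : ℝ, 0 < c ∧
      ∀ f : EuclideanSpace ℝ (Fin n) → ℝ, ContDiff ℝ 1 f →
        (∃ B : ℝ, ∀ x, |f x| ≤ B) → (0 < ⨆ x, |f x|) →
        ∀ x : EuclideanSpace ℝ (Fin n),
          ENNReal.ofReal (c * ‖gradient f x‖ ^ (2 + α) / (⨆ y, |f y|) ^ α) ≤
            ∫⁻ z, ENNReal.ofReal
              (‖gradient f (x + z) - gradient f x‖ ^ 2 * ‖z‖ ^ (-((n : ℝ) + α))) := by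
  obtain ⟨m, rfl⟩ : ∃ m, n = m + 1 := ⟨n - 1, (Nat.succ_pred_eq_of_pos hn).symm⟩
  refine ⟨Real.sqrt ((m : ℝ) + 1) ^ (-(((m : ℝ) + 1) + α)) * 2 ^ ((m : ℝ) - 1 - α),
    by positivity, ?_⟩
  intro f hf hbdd hsup x
  have hcast : ((m + 1 : ℕ) : ℝ) = (m : ℝ) + 1 := by push_cast; ring
  rw [hcast]
  set B := ⨆ y, |f y| with hBdef
  have hB : 0 < B := hsup
  have hfB : ∀ y, |f y| ≤ B := by
    obtain ⟨C, hC⟩ := hbdd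
    exact fun y => le_ciSup ⟨C, by rintro _ ⟨y, rfl⟩; exact hC y⟩ y
  by_cases hgx : gradient f x = 0
  · rw [hgx]
    simp only [norm_zero, Real.zero_rpow (by positivity : (2:ℝ) + α ≠ 0), mul_zero, zero_div,
      ENNReal.ofReal_zero]
    exact zero_le
  set G := ‖gradient f x‖ with hGdef
  have hG : 0 < G := norm_pos_iff.mpr hgx
  set e := G⁻¹ • gradient f x with he_def
  have he : ‖e‖ = 1 := norm_smul_inv_norm hgx
  have hge : (inner ℝ (gradient f x) e : ℝ) = G := by
    rw [he_def, real_inner_smul_right, real_inner_self_eq_norm_sq]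
    rw [pow_two]; field_simp; rfl
  -- orthonormal basis with b 0 = e
  have horth : Orthonormal ℝ (({0} : Set (Fin (m + 1))).restrict fun _ => e) := by
    constructor
    · intro i; exact he
    · intro i j hij
      exact absurd (Subsingleton.elim i j) hij
  obtain ⟨b, hb⟩ := horth.exists_orthonormalBasis_extension_of_card_eq (by simp)
  have hb0 : b 0 = e := hb 0 rfl
  -- the coordinate map
  set A := ((PiLp.continuousLinearEquiv 2 ℝ (fun _ : Fin (m + 1) => ℝ)).symm.trans
      b.repr.symm.toContinuousLinearEquiv) with hA_def
  have hA : MeasurePreserving (fun v : Fin (m + 1) → ℝ => A v) volume volume :=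
    b.measurePreserving_repr_symm.comp
      (EuclideanSpace.volume_preserving_symm_measurableEquiv_toLp (Fin (m + 1))).symm
  have hA1 : A (Pi.single 0 1) = e := by
    have h1 : A (Pi.single 0 1) = b.repr.symm (EuclideanSpace.single 0 1) := rfl
    rw [h1, b.repr_symm_single, hb0]
  -- gradient facts
  have hdiff : Differentiable ℝ f := hf.differentiable one_ne_zero
  have hgc : Continuous (gradient f) :=
    (InnerProductSpace.toDual ℝ _).symm.continuous.comp (hf.continuous_fderiv one_ne_zero)
  have hgrad : ∀ (y v : EuclideanSpace ℝ (Fin (m + 1))),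
      (inner ℝ (gradient f y) v : ℝ) = fderiv ℝ f y v := fun y v =>
    InnerProductSpace.toDual_symm_apply
  -- the box
  set R := 2 * B / G with hRdef
  have hR : 0 < R := by positivity
  set lo : Fin (m + 1) → ℝ := fun _ => -R with hlo
  set hi : Fin (m + 1) → ℝ := fun _ => R with hhi
  have hle : lo ≤ hi := fun i => by
    simp only [hlo, hhi]; linarith
  set S : Set (Fin (m + 1) → ℝ) := Icc lo hi with hSdef
  have hvolS : (volume S).toReal = (2 * R) ^ (m + 1) := by
    rw [hSdef, Real.volume_Icc_pi_toReal hle]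
    simp only [hlo, hhi, sub_neg_eq_add]
    rw [Finset.prod_const, Finset.card_univ, Fintype.card_fin]
    ring_nf
  -- norm bound on the box
  have hnormA : ∀ v ∈ S, ‖A v‖ ≤ Real.sqrt ((m : ℝ) + 1) * R := by
    intro v hv
    have h1 : ‖A v‖ = Real.sqrt (∑ i, v i ^ 2) := by
      have h2 : A v = b.repr.symm ((PiLp.continuousLinearEquiv 2 ℝ
          (fun _ : Fin (m + 1) => ℝ)).symm v) := rfl
      rw [h2, LinearIsometryEquiv.norm_map, EuclideanSpace.norm_eq]
      congr 1
      exact Finset.sum_congr rfl fun i _ => by rw [Real.norm_eq_abs, sq_abs]; rfl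
    rw [h1]
    have h3 : ∑ i, v i ^ 2 ≤ ((m : ℝ) + 1) * R ^ 2 := by
      have : ∀ i, v i ^ 2 ≤ R ^ 2 := fun i => sq_le_sq' (hv.1 i) (hv.2 i)
      calc ∑ i, v i ^ 2 ≤ ∑ _i : Fin (m + 1), R ^ 2 := Finset.sum_le_sum fun i _ => this i
        _ = ((m : ℝ) + 1) * R ^ 2 := by
            rw [Finset.sum_const, Finset.card_univ, Fintype.card_fin]; push_cast; ring
    calc Real.sqrt (∑ i, v i ^ 2) ≤ Real.sqrt (((m : ℝ) + 1) * R ^ 2) := Real.sqrt_le_sqrt h3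
      _ = Real.sqrt ((m : ℝ) + 1) * R := by
          rw [Real.sqrt_mul (by positivity), Real.sqrt_sq hR.le]
  -- divergence theorem bound
  have hdiv : ∫ v in S, (inner ℝ (gradient f (x + A v)) e : ℝ) ≤ 2 * B * (2 * R) ^ m := by
    have hFder : ∀ v : Fin (m + 1) → ℝ, HasFDerivAt (fun w => f (x + A w))
        ((fderiv ℝ f (x + A v)).comp
          (A : (Fin (m + 1) → ℝ) →L[ℝ] EuclideanSpace ℝ (Fin (m + 1)))) v := fun v =>
      ((hdiff (x + A v)).hasFDerivAt).comp v ((A.toContinuousLinearMap.hasFDerivAt).const_add x)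
    set Ff : Fin (m + 1) → (Fin (m + 1) → ℝ) → ℝ :=
      fun i v => if i = 0 then f (x + A v) else 0 with hFf
    set Ff' : Fin (m + 1) → (Fin (m + 1) → ℝ) → (Fin (m + 1) → ℝ) →L[ℝ] ℝ :=
      fun i v => if i = 0 then (fderiv ℝ f (x + A v)).comp
          (A : (Fin (m + 1) → ℝ) →L[ℝ] EuclideanSpace ℝ (Fin (m + 1))) else 0 with hFf'
    have hsum : ∀ v : Fin (m + 1) → ℝ,
        (∑ i, Ff' i v (Pi.single i 1)) = (inner ℝ (gradient f (x + A v)) e : ℝ) := by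
      intro v
      rw [Finset.sum_eq_single 0]
      · simp only [hFf', if_pos rfl, ContinuousLinearMap.coe_comp', Function.comp_apply]
        rw [show ((A : (Fin (m + 1) → ℝ) →L[ℝ] EuclideanSpace ℝ (Fin (m + 1)))
          (Pi.single 0 1)) = e from hA1, hgrad]
      · intro i _ hi; simp [hFf', hi]
      · intro h; exact absurd (Finset.mem_univ 0) h
    have hHc : ∀ i, ContinuousOn (Ff i) (Icc lo hi) := by
      intro i
      by_cases h : i = 0
      · subst h; simp only [hFf, if_pos rfl]
        exact (hf.continuous.comp (continuous_const.add A.continuous)).continuousOn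
      · simp only [hFf, if_neg h]; exact continuousOn_const
    have hHd : ∀ v ∈ (Set.pi univ fun i => Ioo (lo i) (hi i)) \ (∅ : Set (Fin (m + 1) → ℝ)),
        ∀ i, HasFDerivAt (Ff i) (Ff' i v) v := by
      intro v _ i
      by_cases h : i = 0
      · subst h; simp only [hFf, hFf', if_pos rfl]; exact hFder v
      · simp only [hFf, hFf', if_neg h]; exact hasFDerivAt_const 0 v
    have hHi : IntegrableOn (fun v => ∑ i, Ff' i v (Pi.single i 1)) (Icc lo hi) := by
      rw [show (fun v => ∑ i, Ff' i v (Pi.single i 1))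
          = fun v => (inner ℝ (gradient f (x + A v)) e : ℝ) from funext hsum]
      exact (Continuous.inner (hgc.comp (continuous_const.add A.continuous))
        continuous_const).continuousOn.integrableOn_compact isCompact_Icc
    have hthm := integral_divergence_of_hasFDerivAt_off_countable' lo hi hle Ff Ff'
      ∅ countable_empty hHc hHd hHi
    rw [show (fun v => ∑ i, Ff' i v (Pi.single i 1))
        = fun v => (inner ℝ (gradient f (x + A v)) e : ℝ) from funext hsum] at hthm
    have hface : ∀ t : ℝ, |∫ y in Icc (lo ∘ Fin.succAbove 0) (hi ∘ Fin.succAbove 0),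
        f (x + A (Fin.insertNth 0 t y))| ≤ B * (2 * R) ^ m := by
      intro t
      have hμ : volume (Icc (lo ∘ Fin.succAbove 0) (hi ∘ Fin.succAbove 0)) < ⊤ :=
        isCompact_Icc.measure_lt_top
      have hb := norm_setIntegral_le_of_norm_le_const (μ := volume) (C := B) hμ
        (fun y _ => by rw [Real.norm_eq_abs]; exact hfB _)
        (f := fun y => f (x + A (Fin.insertNth 0 t y)))
      rw [Real.norm_eq_abs] at hb
      refine hb.trans (le_of_eq ?_)
      congr 1
      have hle' : (lo ∘ Fin.succAbove 0 : Fin m → ℝ) ≤ hi ∘ Fin.succAbove 0 := fun i => hle (Fin.succAbove 0 i)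
      rw [measureReal_def, Real.volume_Icc_pi_toReal hle']
      simp only [Function.comp_apply, hlo, hhi, sub_neg_eq_add]
      rw [Finset.prod_const, Finset.card_univ, Fintype.card_fin]
      ring
    rw [hSdef, hthm, Finset.sum_eq_single 0]
    · have h1 := hface R
      have h2 := hface (-R)
      have e1 : Ff 0 ∘ Fin.insertNth 0 (hi 0) = fun y => f (x + A (Fin.insertNth 0 R y)) := by
        funext y; simp [hFf, hhi]
      simp only [hFf, if_pos rfl, hhi, hlo] at *
      have := abs_le.mp h1
      have := abs_le.mp h2
      linarith [this.1, this.2, (abs_le.mp h1).1, (abs_le.mp h1).2]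
    · intro i _ hi0
      simp [hFf, hi0]
    · intro h; exact absurd (Finset.mem_univ 0) h
  -- integrability facts
  have hq_cont : Continuous fun v : Fin (m + 1) → ℝ =>
      ‖gradient f (x + A v) - gradient f x‖ ^ 2 :=
    ((hgc.comp (continuous_const.add A.continuous)).sub continuous_const).norm.pow 2
  have hInt_q : IntegrableOn (fun v => ‖gradient f (x + A v) - gradient f x‖ ^ 2) S :=
    hq_cont.continuousOn.integrableOn_compact (hSdef ▸ isCompact_Icc)
  have hh_cont : Continuous fun v : Fin (m + 1) → ℝ =>
      (inner ℝ (gradient f (x + A v)) e : ℝ) :=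
    Continuous.inner (hgc.comp (continuous_const.add A.continuous)) continuous_const
  have hInt_h : IntegrableOn (fun v => (inner ℝ (gradient f (x + A v)) e : ℝ)) S :=
    hh_cont.continuousOn.integrableOn_compact (hSdef ▸ isCompact_Icc)
  have hvol_lt : volume S < ⊤ := hSdef ▸ isCompact_Icc.measure_lt_top
  -- key real estimate
  have key : B * G * (2 * R) ^ m ≤
      ∫ v in S, ‖gradient f (x + A v) - gradient f x‖ ^ 2 := by
    have hpt : ∀ v : Fin (m + 1) → ℝ, 0 ≤ ‖gradient f (x + A v) - gradient f x‖ ^ 2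
        + G * ((inner ℝ (gradient f (x + A v)) e : ℝ) - G) + G ^ 2 / 4 := by
      intro v
      have h1 : |(inner ℝ (gradient f (x + A v) - gradient f x) e : ℝ)|
          ≤ ‖gradient f (x + A v) - gradient f x‖ := by
        simpa [he] using abs_real_inner_le_norm (gradient f (x + A v) - gradient f x) e
      have h2 : (inner ℝ (gradient f (x + A v) - gradient f x) e : ℝ)
          = (inner ℝ (gradient f (x + A v)) e : ℝ) - G := by
        rw [inner_sub_left, hge]
      rw [h2] at h1
      have h3 := abs_le.mp h1
      nlinarith [sq_nonneg (‖gradient f (x + A v) - gradient f x‖ - G / 2), h3.1, h3.2, hG.le]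
    have hInt_t2 : IntegrableOn
        (fun v => G * ((inner ℝ (gradient f (x + A v)) e : ℝ) - G)) S :=
      ((hInt_h.sub (integrableOn_const hvol_lt.ne)).const_mul G)
    have hInt_t3 : IntegrableOn (fun _ => G ^ 2 / 4) S :=
      integrableOn_const hvol_lt.ne
    have hint_nonneg : 0 ≤ ∫ v in S, (‖gradient f (x + A v) - gradient f x‖ ^ 2
        + G * ((inner ℝ (gradient f (x + A v)) e : ℝ) - G) + G ^ 2 / 4) :=
      setIntegral_nonneg (hSdef ▸ measurableSet_Icc) fun v _ => hpt v
    have hInt_12 : IntegrableOn (fun v => ‖gradient f (x + A v) - gradient f x‖ ^ 2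
        + G * ((inner ℝ (gradient f (x + A v)) e : ℝ) - G)) S := hInt_q.add hInt_t2
    rw [integral_add hInt_12 hInt_t3, integral_add hInt_q hInt_t2,
      integral_const_mul, integral_sub hInt_h (integrableOn_const hvol_lt.ne),
      setIntegral_const, setIntegral_const, smul_eq_mul, smul_eq_mul, measureReal_def, hvolS] at hint_nonneg
    have hGR : G * R = 2 * B := by rw [hRdef]; field_simp
    have hkey2 : G ^ 2 * (2 * R) ^ (m + 1) = 4 * B * G * (2 * R) ^ m := by
      rw [pow_succ]
      linear_combination (2 * G * (2 * R) ^ m) * hGR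
    nlinarith [mul_le_mul_of_nonneg_left hdiv hG.le, hint_nonneg, hkey2,
      pow_nonneg (by positivity : (0:ℝ) ≤ 2 * R) m]
  -- measurability of the integrand
  have hWmeas : Measurable fun z : EuclideanSpace ℝ (Fin (m + 1)) =>
      ENNReal.ofReal (‖gradient f (x + z) - gradient f x‖ ^ 2 * ‖z‖ ^ (-((m : ℝ) + 1 + α))) := by
    apply Measurable.ennreal_ofReal
    exact (((hgc.comp (continuous_const.add continuous_id)).sub
        continuous_const).norm.pow 2).measurable.mul
      (cv_meas_norm_rpow _ (neg_ne_zero.mpr (by positivity : ((m : ℝ) + 1 + α)  ≠ 0)))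
  have hK : (0:ℝ) < (Real.sqrt ((m : ℝ) + 1) * R) ^ (-((m : ℝ) + 1 + α)) := by positivity
  -- the ENNReal chain
  calc ENNReal.ofReal (Real.sqrt ((m : ℝ) + 1) ^ (-((m : ℝ) + 1 + α)) * 2 ^ ((m : ℝ) - 1 - α)
        * G ^ (2 + α) / B ^ α)
      = ENNReal.ofReal ((Real.sqrt ((m : ℝ) + 1) * R) ^ (-((m : ℝ) + 1 + α))
          * (B * G * (2 * R) ^ m)) := by
        rw [cv_alg m α B G hB hG, ← hRdef]
    _ ≤ ENNReal.ofReal ((Real.sqrt ((m : ℝ) + 1) * R) ^ (-((m : ℝ) + 1 + α))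
          * ∫ v in S, ‖gradient f (x + A v) - gradient f x‖ ^ 2) :=
        ENNReal.ofReal_le_ofReal (mul_le_mul_of_nonneg_left key hK.le)
    _ = ∫⁻ v in S, ENNReal.ofReal ((Real.sqrt ((m : ℝ) + 1) * R) ^ (-((m : ℝ) + 1 + α))
          * ‖gradient f (x + A v) - gradient f x‖ ^ 2) := by
        rw [← integral_const_mul]
        exact ofReal_integral_eq_lintegral_ofReal (hInt_q.const_mul _)
          (ae_of_all _ fun v => by positivity)
    _ ≤ ∫⁻ v in S, ENNReal.ofReal (‖gradient f (x + A v) - gradient f x‖ ^ 2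
          * ‖A v‖ ^ (-((m : ℝ) + 1 + α))) := by
        apply setLIntegral_mono (hWmeas.comp hA.measurable)
        intro v hv
        apply ENNReal.ofReal_le_ofReal
        rcases eq_or_ne (A v) (0 : EuclideanSpace ℝ (Fin (m + 1))) with h0 | h0
        · have hz : ‖gradient f (x + A v) - gradient f x‖ ^ 2 = 0 := by
            rw [h0, add_zero]; simp
          rw [hz]; simp
        · have hAv : (0:ℝ) < ‖A v‖ := norm_pos_iff.mpr h0
          have h1 : (Real.sqrt ((m : ℝ) + 1) * R) ^ (-((m : ℝ) + 1 + α))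
              ≤ ‖A v‖ ^ (-((m : ℝ) + 1 + α)) :=
            Real.rpow_le_rpow_of_nonpos hAv (hnormA v hv)
              (neg_nonpos.mpr (by positivity))
          rw [mul_comm]
          exact mul_le_mul_of_nonneg_left h1 (by positivity)
    _ ≤ ∫⁻ v, ENNReal.ofReal (‖gradient f (x + A v) - gradient f x‖ ^ 2
          * ‖A v‖ ^ (-((m : ℝ) + 1 + α))) := setLIntegral_le_lintegral _ _
    _ = ∫⁻ z, ENNReal.ofReal (‖gradient f (x + z) - gradient f x‖ ^ 2
          * ‖z‖ ^ (-((m : ℝ) + 1 + α))) := hA.lintegral_comp hWmeas
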